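/- For all nonnegative integers N, p(⌊3N/2⌋, 3, N) - p(⌊3N/2⌋ - 1, 3, N) equals 1 if N ≡ 0 (mod 4) and 0 if N ≡ 1, 2, or 3 (mod 4). -/

import Mathlib

/-- `pBdd n m N` is the number of partitions of `n` into at most `m` parts,
each part at most `N`; it is `0` for negative `n`. -/
noncomputable def pBdd (n : ℤ) (m N : ℕ) : ℕ :=
  if 0 ≤ n then
    Nat.card {π : Nat.Partition n.toNat //
      Multiset.card π.parts ≤ m ∧ ∀ i ∈ π.parts, i ≤ N}
  else 0

/-- `pAtMost n m` is the number of partitions of `n` into at most `m` parts;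
it is `0` for negative `n`. -/
noncomputable def pAtMost (n : ℤ) (m : ℕ) : ℕ :=
  if 0 ≤ n then
    Nat.card {π : Nat.Partition n.toNat // Multiset.card π.parts ≤ m}
  else 0

open Finset

/-- the set of pairs (a,b) with b ≤ a ≤ N, a+b ≤ m ≤ a+2b -/
def Tset (m N : ℕ) : Finset (ℕ × ℕ) :=
  (Finset.range (N+1) ×ˢ Finset.range (N+1)).filter
    (fun p => p.2 ≤ p.1 ∧ p.1 + p.2 ≤ m ∧ m ≤ p.1 + 2 * p.2)

lemma mem_Tset {m N : ℕ} {p : ℕ × ℕ} :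
    p ∈ Tset m N ↔ p.1 ≤ N ∧ p.2 ≤ N ∧ p.2 ≤ p.1 ∧ p.1 + p.2 ≤ m ∧ m ≤ p.1 + 2 * p.2 := by
  simp [Tset, Finset.mem_filter, Finset.mem_product, Nat.lt_succ_iff]
  tauto

def pairOf : List ℕ → ℕ × ℕ
  | [] => (0, 0)
  | [a] => (a, 0)
  | [b, a] => (a, b)
  | _ :: b :: a :: _ => (a, b)

noncomputable def toPair (m : ℕ) (π : Nat.Partition m) : ℕ × ℕ :=
  pairOf (π.parts.sort (· ≤ ·))

lemma multiset_sum_filter_pos (s : Multiset ℕ) :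
    (s.filter (0 < ·)).sum = s.sum := by
  conv_rhs => rw [← Multiset.filter_add_not (0 < ·) s]
  rw [Multiset.sum_add]
  have : (Multiset.filter (fun a => ¬ 0 < a) s).sum = 0 := by
    apply Multiset.sum_eq_zero
    intro x hx
    have := Multiset.of_mem_filter hx
    omega
  omega

def fromPair (m : ℕ) (p : ℕ × ℕ) : Nat.Partition m :=
  if h : p.1 + p.2 ≤ m then
    { parts := Multiset.filter (0 < ·) ↑[m - p.1 - p.2, p.2, p.1]
      parts_pos := fun hx => Multiset.of_mem_filter hx
      parts_sum := by
        rw [multiset_sum_filter_pos]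
        simp [Multiset.sum_coe]
        omega }
  else
    { parts := Multiset.filter (0 < ·) ↑[m]
      parts_pos := fun hx => Multiset.of_mem_filter hx
      parts_sum := by
        rw [multiset_sum_filter_pos]
        simp }

lemma sort_coe_of_sorted {l : List ℕ} (h : l.Pairwise (· ≤ ·)) :
    Multiset.sort (↑l : Multiset ℕ) (· ≤ ·) = l :=
  List.Perm.eq_of_pairwise' (Multiset.pairwise_sort _ _) h
    (Multiset.coe_eq_coe.mp (Multiset.sort_eq _ _))

lemma master {m N : ℕ} (π : Nat.Partition m) (h3 : Multiset.card π.parts ≤ 3)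
    (hN : ∀ i ∈ π.parts, i ≤ N) :
    toPair m π ∈ Tset m N ∧ fromPair m (toPair m π) = π := by
  set L := π.parts.sort (· ≤ ·) with hLdef
  have hcoe : (↑L : Multiset ℕ) = π.parts := Multiset.sort_eq _ _
  have hlen : L.length ≤ 3 := by
    rw [hLdef, Multiset.length_sort]; exact h3
  have hsort : L.Pairwise (· ≤ ·) := Multiset.pairwise_sort _ _
  have hsum : L.sum = m := by
    have := π.parts_sum
    rw [← hcoe] at this
    simpa using this
  have hmem : ∀ x ∈ L, 0 < x ∧ x ≤ N := by
    intro x hx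
    have hx' : x ∈ π.parts := by rw [← hcoe]; exact_mod_cast hx
    exact ⟨π.parts_pos hx', hN x hx'⟩
  have hpartsL : π.parts = (↑L : Multiset ℕ) := hcoe.symm
  clear_value L
  have hfrom : ∀ a b : ℕ, toPair m π = (a, b) → a + b ≤ m →
      (fromPair m (a, b)).parts = Multiset.filter (0 < ·) ↑[m - a - b, b, a] := by
    intro a b _ hab
    rw [fromPair, dif_pos hab]
  match L, hlen with
  | [], _ =>
    have hm : m = 0 := by simpa using hsum.symm
    have htp : toPair m π = (0, 0) := by rw [toPair, ← hLdef]; rfl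
    constructor
    · rw [htp, mem_Tset]; omega
    · rw [htp]
      ext1
      rw [hfrom 0 0 htp (by omega), hpartsL]
      simp [hm]
  | [a], _ =>
    have hm : a = m := by simpa using hsum
    obtain ⟨ha0, haN⟩ := hmem a (by simp)
    have htp : toPair m π = (a, 0) := by rw [toPair, ← hLdef]; rfl
    constructor
    · rw [htp, mem_Tset]; omega
    · rw [htp]
      ext1
      rw [hfrom a 0 htp (by omega), hpartsL]
      have h1 : m - a - 0 = 0 := by omega
      rw [h1]
      rw [show ([(0:ℕ), 0, a] : Multiset ℕ) = (0 ::ₘ 0 ::ₘ (↑[a] : Multiset ℕ)) from rfl]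
      rw [Multiset.filter_cons_of_neg _ (by omega), Multiset.filter_cons_of_neg _ (by omega)]
      rw [Multiset.filter_eq_self.mpr]
      intro x hx
      simp at hx
      omega
  | [b, a], _ =>
    simp only [List.pairwise_cons] at hsort
    have hba : b ≤ a := by tauto
    have hm : b + a = m := by simpa using hsum
    obtain ⟨hb0, hbN⟩ := hmem b (by simp)
    obtain ⟨ha0, haN⟩ := hmem a (by simp)
    have htp : toPair m π = (a, b) := by rw [toPair, ← hLdef]; rfl
    constructor
    · rw [htp, mem_Tset]; omega
    · rw [htp]
      ext1
      rw [hfrom a b htp (by omega), hpartsL]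
      have h1 : m - a - b = 0 := by omega
      rw [h1]
      rw [show ([(0:ℕ), b, a] : Multiset ℕ) = (0 ::ₘ (↑[b, a] : Multiset ℕ)) from rfl]
      rw [Multiset.filter_cons_of_neg _ (by omega)]
      rw [Multiset.filter_eq_self.mpr]
      intro x hx
      simp at hx
      omega
  | [c, b, a], _ =>
    simp only [List.pairwise_cons] at hsort
    have hcb : c ≤ b := by tauto
    have hba : b ≤ a := by tauto
    have hm : c + (b + a) = m := by simpa using hsum
    obtain ⟨hc0, hcN⟩ := hmem c (by simp)
    obtain ⟨hb0, hbN⟩ := hmem b (by simp)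
    obtain ⟨ha0, haN⟩ := hmem a (by simp)
    have htp : toPair m π = (a, b) := by rw [toPair, ← hLdef]; rfl
    constructor
    · rw [htp, mem_Tset]; omega
    · rw [htp]
      ext1
      rw [hfrom a b htp (by omega), hpartsL]
      have h1 : m - a - b = c := by omega
      rw [h1]
      rw [Multiset.filter_eq_self.mpr]
      intro x hx
      simp at hx
      omega
  | _ :: _ :: _ :: _ :: _, hlen => simp at hlen; omega

lemma master2 {m N : ℕ} {p : ℕ × ℕ} (hp : p ∈ Tset m N) :
    toPair m (fromPair m p) = p ∧ Multiset.card (fromPair m p).parts ≤ 3 ∧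
      ∀ i ∈ (fromPair m p).parts, i ≤ N := by
  obtain ⟨a, b⟩ := p
  rw [mem_Tset] at hp
  simp only at hp
  obtain ⟨haN, hbN, hba, hab, hab2⟩ := hp
  set c := m - a - b with hc
  have hcb : c ≤ b := by omega
  have hparts : (fromPair m (a, b)).parts = Multiset.filter (0 < ·) ↑[c, b, a] := by
    rw [fromPair, dif_pos (by simpa using hab)]
  have hfl : Multiset.filter (0 < ·) (↑[c, b, a] : Multiset ℕ)
      = ↑(List.filter (fun x => decide (0 < x)) [c, b, a]) := by
    simp
  refine ⟨?_, ?_, ?_⟩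
  · rw [toPair, hparts, hfl]
    by_cases hc0 : 0 < c
    · have : List.filter (fun x => decide (0 < x)) [c, b, a] = [c, b, a] := by
        simp; omega
      rw [this, sort_coe_of_sorted (by simp [List.pairwise_cons]; omega)]
      rfl
    · by_cases hb0 : 0 < b
      · have : List.filter (fun x => decide (0 < x)) [c, b, a] = [b, a] := by
          simp [hc0]; omega
        rw [this, sort_coe_of_sorted (by simp [List.pairwise_cons]; omega)]
        rfl
      · by_cases ha0 : 0 < a
        · have : List.filter (fun x => decide (0 < x)) [c, b, a] = [a] := by
            simp [hc0, hb0]; omega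
          rw [this, sort_coe_of_sorted (by simp)]
          have : b = 0 := by omega
          simp [pairOf, this]
        · have : List.filter (fun x => decide (0 < x)) [c, b, a] = [] := by
            simp; omega
          rw [this]
          have hb : b = 0 := by omega
          have ha : a = 0 := by omega
          simp [pairOf, ha, hb]
  · rw [hparts]
    calc Multiset.card (Multiset.filter (0 < ·) ↑[c, b, a])
        ≤ Multiset.card (↑[c, b, a] : Multiset ℕ) := Multiset.card_le_card (Multiset.filter_le _ _)
      _ = 3 := by simp
  · rw [hparts]
    intro i hi
    have := Multiset.of_mem_filter hi
    have hmem := Multiset.mem_of_mem_filter hi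
    simp at hmem
    omega

lemma pBdd_eq_card (m N : ℕ) : pBdd (m : ℤ) 3 N = (Tset m N).card := by
  rw [pBdd, if_pos (by positivity)]
  have h : ((m : ℤ)).toNat = m := by simp
  rw [Nat.card_eq_fintype_card]
  rw [h]
  rw [Fintype.card_subtype]
  apply Finset.card_nbij' (i := toPair m) (j := fromPair m)
  · intro π hπ
    simp only [Finset.mem_coe, Finset.mem_filter, Finset.mem_univ, true_and] at hπ
    exact (master π hπ.1 hπ.2).1
  · intro p hp
    simp only [Finset.mem_coe, Finset.mem_filter, Finset.mem_univ, true_and]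
    exact (master2 hp).2
  · intro π hπ
    simp only [Finset.mem_coe, Finset.mem_filter, Finset.mem_univ, true_and] at hπ
    exact (master π hπ.1 hπ.2).2
  · intro p hp
    exact (master2 hp).1

lemma recT {m N : ℕ} (hN : 4 ≤ N) (h1 : N + 1 ≤ m) (h2 : m ≤ 2*N - 1) :
    (Tset m N).card = (Tset (m-3) (N-2)).card + (N + 1 - (m+1)/2) + ((m-N) - (m-N+1)/2) := by
  classical
  have hsplit1 := Finset.card_filter_add_card_filter_not
    (s := Tset m N) (p := fun p => p.1 + p.2 = m)
  have hsplit2 := Finset.card_filter_add_card_filter_not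
    (s := (Tset m N).filter (fun p => ¬ p.1 + p.2 = m)) (p := fun p => p.1 = N)
  -- B1
  have hB1 : (Tset m N).filter (fun p => p.1 + p.2 = m)
      = (Finset.Icc ((m+1)/2) N).image (fun a => (a, m - a)) := by
    ext ⟨a, b⟩
    simp only [Finset.mem_filter, mem_Tset, Finset.mem_image, Finset.mem_Icc, Prod.mk.injEq]
    constructor
    · rintro ⟨⟨haN, hbN, hba, hab, hab2⟩, he⟩
      exact ⟨a, ⟨by omega, haN⟩, rfl, by omega⟩
    · rintro ⟨x, ⟨hx1, hx2⟩, rfl, rfl⟩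
      omega
  have hB1c : ((Tset m N).filter (fun p => p.1 + p.2 = m)).card = N + 1 - (m+1)/2 := by
    rw [hB1, Finset.card_image_of_injective _ (fun x y h => (Prod.mk.injEq _ _ _ _).mp h |>.1),
      Nat.card_Icc]
  -- B2
  have hB2 : ((Tset m N).filter (fun p => ¬ p.1 + p.2 = m)).filter (fun p => p.1 = N)
      = (Finset.Icc ((m-N+1)/2) (m-N-1)).image (fun b => (N, b)) := by
    ext ⟨a, b⟩
    simp only [Finset.mem_filter, mem_Tset, Finset.mem_image, Finset.mem_Icc, Prod.mk.injEq]
    constructor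
    · rintro ⟨⟨⟨haN, hbN, hba, hab, hab2⟩, hne⟩, rfl⟩
      exact ⟨b, by omega, rfl, rfl⟩
    · rintro ⟨x, ⟨hx1, hx2⟩, rfl, rfl⟩
      refine ⟨⟨⟨le_refl _, by omega, by omega, by omega, by omega⟩, by omega⟩, rfl⟩
  have hB2c : (((Tset m N).filter (fun p => ¬ p.1 + p.2 = m)).filter (fun p => p.1 = N)).card
      = (m-N) - (m-N+1)/2 := by
    rw [hB2, Finset.card_image_of_injective _ (fun x y h => (Prod.mk.injEq _ _ _ _).mp h |>.2),
      Nat.card_Icc]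
    omega
  -- interior
  have hint : (((Tset m N).filter (fun p => ¬ p.1 + p.2 = m)).filter (fun p => ¬ p.1 = N)).card
      = (Tset (m-3) (N-2)).card := by
    apply Finset.card_nbij' (i := fun p => (p.1 - 1, p.2 - 1)) (j := fun p => (p.1 + 1, p.2 + 1))
    · rintro ⟨a, b⟩ hp
      simp only [Finset.mem_coe, Finset.mem_filter, mem_Tset] at hp ⊢
      omega
    · rintro ⟨a, b⟩ hp
      simp only [Finset.mem_coe, Finset.mem_filter, mem_Tset] at hp ⊢
      omega
    · rintro ⟨a, b⟩ hp
      simp only [Finset.mem_coe, Finset.mem_filter, mem_Tset] at hp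
      simp only [Prod.mk.injEq]
      omega
    · rintro ⟨a, b⟩ hp
      simp only [Finset.mem_coe, mem_Tset] at hp
      simp only [Prod.mk.injEq]
      omega
  omega

lemma keyT (N : ℕ) (h : 1 ≤ N) :
    (Tset (3*N/2) N).card = (Tset (3*N/2 - 1) N).card + (if N % 4 = 0 then 1 else 0) := by
  induction N using Nat.strong_induction_on with
  | _ N IH =>
    by_cases hN : N < 6
    · interval_cases N
      · decide
      · decide
      · decide
      · decide
      · decide
    · have h6 : 6 ≤ N := by omega
      have e1 := recT (m := 3*N/2) (N := N) (by omega) (by omega) (by omega)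
      have e2 := recT (m := 3*N/2 - 1) (N := N) (by omega) (by omega) (by omega)
      have e3 := IH (N-2) (by omega) (by omega)
      rw [show 3*(N-2)/2 = 3*N/2 - 3 from by omega] at e3
      rw [show 3*N/2 - 3 - 1 = 3*N/2 - 1 - 3 from by omega] at e3
      obtain ⟨k, hk | hk⟩ := Nat.even_or_odd' N <;> subst hk <;>
        split_ifs at e3 ⊢ <;> omega

theorem stmt10 (N : ℕ) :
    (pBdd ((3 * N / 2 : ℕ) : ℤ) 3 N : ℤ) - pBdd (((3 * N / 2 : ℕ) : ℤ) - 1) 3 N =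
      if N % 4 = 0 then 1 else 0 := by
  by_cases h1 : 1 ≤ N
  · have hn1 : 1 ≤ 3 * N / 2 := by omega
    have hcast : ((3 * N / 2 : ℕ) : ℤ) - 1 = ((3 * N / 2 - 1 : ℕ) : ℤ) := by
      omega
    rw [hcast, pBdd_eq_card, pBdd_eq_card]
    have hk := keyT N h1
    split_ifs at hk ⊢ <;> omega
  · have hN0 : N = 0 := by omega
    subst hN0
    rw [show ((3 * 0 / 2 : ℕ) : ℤ) = ((0 : ℕ) : ℤ) from by norm_num]
    rw [pBdd_eq_card]
    rw [show ((0 : ℕ) : ℤ) - 1 = (-1 : ℤ) from by norm_num]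
    rw [show pBdd (-1) 3 0 = 0 from by rw [pBdd, if_neg (by norm_num)]]
    norm_num
    decide
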